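/- arXiv:2307.15805 — 2 statements merged into one kernel-verified Lean document; each statement's English description precedes it below -/
import Mathlib

section
/- Let σ > 0, ρ ∈ (−1, 1) and γ > 0. The function f(x) = ½(1 − Φ(√2 x/(σ√(1−ρ)))) − 2γx has a unique positive root, where Φ is the standard normal CDF. -/
open Real MeasureTheory

noncomputable def stdPhi (x : ℝ) : ℝ := ∫ t in Set.Iic x, Real.exp (-t^2/2) / Real.sqrt (2*Real.pi)

lemma gauss_eq (t : ℝ) : Real.exp (-(1/2) * t^2) / Real.sqrt (2*Real.pi)
    = Real.exp (-t^2/2) / Real.sqrt (2*Real.pi) := by ring_nf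

lemma gauss_integrable :
    Integrable (fun t : ℝ => Real.exp (-t^2/2) / Real.sqrt (2*Real.pi)) := by
  have h := (integrable_exp_neg_mul_sq (by norm_num : (0:ℝ) < 1/2)).div_const
    (Real.sqrt (2*Real.pi))
  have he : (fun x : ℝ => Real.exp (-(1/2) * x^2) / Real.sqrt (2*Real.pi))
      = fun t : ℝ => Real.exp (-t^2/2) / Real.sqrt (2*Real.pi) := funext gauss_eq
  exact he ▸ h

lemma gauss_nonneg (t : ℝ) : 0 ≤ Real.exp (-t^2/2) / Real.sqrt (2*Real.pi) :=
  div_nonneg (Real.exp_nonneg _) (Real.sqrt_nonneg _)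

lemma stdPhi_sub (a b : ℝ) : stdPhi b - stdPhi a
    = ∫ t in a..b, Real.exp (-t^2/2) / Real.sqrt (2*Real.pi) := by
  exact intervalIntegral.integral_Iic_sub_Iic gauss_integrable.integrableOn gauss_integrable.integrableOn

lemma stdPhi_mono : Monotone stdPhi := by
  intro a b hab
  have h := stdPhi_sub a b
  have : 0 ≤ ∫ t in a..b, Real.exp (-t^2/2) / Real.sqrt (2*Real.pi) :=
    intervalIntegral.integral_nonneg hab fun t _ => gauss_nonneg t
  linarith [h ▸ this]

lemma stdPhi_continuous : Continuous stdPhi := by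
  have : ∀ x, stdPhi x = stdPhi 0 + ∫ t in (0:ℝ)..x,
      Real.exp (-t^2/2) / Real.sqrt (2*Real.pi) := by
    intro x; have := stdPhi_sub 0 x; linarith
  rw [show stdPhi = fun x => stdPhi 0 + ∫ t in (0:ℝ)..x,
      Real.exp (-t^2/2) / Real.sqrt (2*Real.pi) from funext this]
  exact continuous_const.add (intervalIntegral.continuous_primitive
    (fun a b => gauss_integrable.intervalIntegrable) 0)

lemma stdPhi_nonneg (x : ℝ) : 0 ≤ stdPhi x :=
  integral_nonneg fun t => gauss_nonneg t

lemma stdPhi_zero : stdPhi 0 = 1/2 := by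
  have hsym : stdPhi 0 = ∫ t in Set.Ioi (0:ℝ), Real.exp (-t^2/2) / Real.sqrt (2*Real.pi) := by
    rw [stdPhi, show (0:ℝ) = -0 by norm_num,
      ← integral_comp_neg_Iic (0:ℝ) (fun t => Real.exp (-t^2/2) / Real.sqrt (2*Real.pi))]
    simp [neg_sq]
  have h : ∫ t in Set.Ioi (0:ℝ), Real.exp (-(1/2) * t^2) = Real.sqrt (Real.pi / (1/2)) / 2 :=
    integral_gaussian_Ioi (1/2)
  have h2 : ∫ t in Set.Ioi (0:ℝ), Real.exp (-t^2/2) / Real.sqrt (2*Real.pi)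
      = (∫ t in Set.Ioi (0:ℝ), Real.exp (-(1/2) * t^2)) / Real.sqrt (2*Real.pi) := by
    rw [integral_div]
    congr 1
    refine setIntegral_congr_fun measurableSet_Ioi fun t _ => ?_
    congr 1; ring
  have hπ : Real.sqrt (Real.pi / (1/2)) = Real.sqrt (2*Real.pi) := by
    congr 1; ring
  have hs : (0:ℝ) < Real.sqrt (2*Real.pi) :=
    Real.sqrt_pos.mpr (by positivity)
  rw [hsym, h2, h, hπ]
  field_simp

/-- For `σ > 0`, `ρ ∈ (−1,1)`, `γ > 0`, the function
`f(x) = ½(1 − Φ(√2 x/(σ√(1−ρ)))) − 2γx` has a unique positive root. -/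
theorem unique_positive_root_NE (σ ρ γ : ℝ) (hσ : 0 < σ) (hρ : ρ ∈ Set.Ioo (-1 : ℝ) 1)
    (hγ : 0 < γ) :
    ∃! x : ℝ, 0 < x ∧
      (1/2) * (1 - stdPhi (Real.sqrt 2 * x / (σ * Real.sqrt (1 - ρ)))) - 2 * γ * x = 0 := by
  set c : ℝ := Real.sqrt 2 / (σ * Real.sqrt (1 - ρ)) with hc
  have hden : 0 < σ * Real.sqrt (1 - ρ) :=
    mul_pos hσ (Real.sqrt_pos.mpr (by linarith [hρ.2]))
  have hcpos : 0 < c := div_pos (Real.sqrt_pos.mpr (by norm_num)) hden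
  set f : ℝ → ℝ := fun x =>
    (1/2) * (1 - stdPhi (Real.sqrt 2 * x / (σ * Real.sqrt (1 - ρ)))) - 2 * γ * x with hf
  have harg : ∀ x : ℝ, Real.sqrt 2 * x / (σ * Real.sqrt (1 - ρ)) = c * x := by
    intro x; rw [hc]; ring
  have hanti : StrictAnti f := by
    intro a b hab
    have h1 : stdPhi (c * a) ≤ stdPhi (c * b) :=
      stdPhi_mono (by nlinarith)
    simp only [hf, harg]
    nlinarith
  have hcont : Continuous f := by
    apply Continuous.sub
    · exact continuous_const.mul (continuous_const.sub
        (stdPhi_continuous.comp (by continuity)))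
    · continuity
  have hf0 : f 0 = 1/4 := by
    simp [hf, stdPhi_zero]; norm_num
  set M : ℝ := 1 / (2 * γ) with hM
  have hMpos : 0 < M := by positivity
  have hfM : f M < 0 := by
    have h1 : 0 ≤ stdPhi (Real.sqrt 2 * M / (σ * Real.sqrt (1 - ρ))) := stdPhi_nonneg _
    have h2 : 2 * γ * M = 1 := by rw [hM]; field_simp [hγ.ne']
    simp only [hf]
    nlinarith
  -- existence via IVT
  have hIoo : (0:ℝ) ∈ Set.Ioo (f M) (f 0) := ⟨hfM, by rw [hf0]; norm_num⟩
  obtain ⟨x, hxmem, hxeq⟩ := intermediate_value_Ioo' hMpos.le hcont.continuousOn hIoo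
  refine ⟨x, ⟨hxmem.1, hxeq⟩, ?_⟩
  rintro y ⟨hy, hyeq⟩
  have hfy : f y = 0 := hyeq
  by_contra hne
  rcases lt_or_gt_of_ne hne with h | h
  · have := hanti h; rw [hfy, hxeq] at this; exact lt_irrefl 0 this
  · have := hanti h; rw [hfy, hxeq] at this; exact lt_irrefl 0 this
end

section
/- Let k̄ > 0, ρ ∈ (−1,1), σ > 0, γ > 0, and Φ the standard normal CDF. The function h(x) = (k̄/2)(−x(1 − Φ(√2x/(√(1−ρ)σ))) + (σ√(1−ρ)/√2)Φ'(√2x/(√(1−ρ)σ))) − 2γx has a unique positive root. -/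
open Real
open MeasureTheory

noncomputable def stdPhi' (x : ℝ) : ℝ := Real.exp (-x^2/2) / Real.sqrt (2*Real.pi)

lemma stdPhi'_integrable : Integrable stdPhi' := by
  have h := (integrable_exp_neg_mul_sq (b := 1/2) (by norm_num)).div_const (Real.sqrt (2*Real.pi))
  refine h.congr ?_
  filter_upwards with t
  unfold stdPhi'
  ring_nf

lemma stdPhi'_pos (x : ℝ) : 0 < stdPhi' x := by
  unfold stdPhi'
  positivity

lemma stdPhi'_le (x : ℝ) : stdPhi' x ≤ 1 / Real.sqrt (2*Real.pi) := by
  unfold stdPhi'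
  have h1 : Real.exp (-x^2/2) ≤ 1 := Real.exp_le_one_iff.mpr (by nlinarith [sq_nonneg x])
  gcongr

lemma stdPhi'_continuous : Continuous stdPhi' := by
  unfold stdPhi'
  fun_prop

lemma integral_stdPhi' : ∫ t, stdPhi' t = 1 := by
  have h2 : ∫ x : ℝ, Real.exp (-(1/2) * x ^ 2) = Real.sqrt (Real.pi / (1/2)) :=
    integral_gaussian (1/2)
  have : (∫ t, stdPhi' t) = (∫ x : ℝ, Real.exp (-(1/2) * x ^ 2)) / Real.sqrt (2*Real.pi) := by
    rw [← integral_div]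
    congr 1 with t
    unfold stdPhi'
    ring_nf
  rw [this, h2]
  rw [show Real.pi / (1/2) = 2 * Real.pi by ring]
  field_simp

lemma stdPhi_le_one (x : ℝ) : stdPhi x ≤ 1 := by
  rw [← integral_stdPhi']
  exact setIntegral_le_integral stdPhi'_integrable
    (Filter.Eventually.of_forall fun t => (stdPhi'_pos t).le)

lemma stdPhi_hasDerivAt (x : ℝ) : HasDerivAt stdPhi (stdPhi' x) x := by
  have heq : stdPhi = fun u => stdPhi 0 + ∫ t in (0:ℝ)..u, stdPhi' t := by
    funext u
    have := intervalIntegral.integral_Iic_sub_Iic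
      (stdPhi'_integrable.integrableOn) (stdPhi'_integrable.integrableOn) (a := 0) (b := u)
    unfold stdPhi stdPhi' at *
    linarith
  rw [heq]
  have : HasDerivAt (fun u => ∫ t in (0:ℝ)..u, stdPhi' t) (stdPhi' x) x :=
    intervalIntegral.integral_hasDerivAt_right
      (stdPhi'_integrable.intervalIntegrable)
      (stdPhi'_continuous.stronglyMeasurableAtFilter _ _)
      stdPhi'_continuous.continuousAt
  simpa using this.const_add (stdPhi 0)

lemma stdPhi'_hasDerivAt (x : ℝ) : HasDerivAt stdPhi' (-x * stdPhi' x) x := by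
  have h1 : HasDerivAt (fun t : ℝ => -t^2/2) (-x) x := by
    have := ((hasDerivAt_pow 2 x).neg.div_const 2)
    simpa using this.congr_deriv (by ring)
  have h2 := (h1.exp).div_const (Real.sqrt (2*Real.pi))
  unfold stdPhi'
  exact h2.congr_deriv (by ring)

/-- In the symmetric half-linear game with slope `k̄`, correlation `ρ` and fee `γ`,
the function `h` has a unique positive root. -/
theorem half_linear_unique_root (k ρ σ γ : ℝ) (hk : 0 < k)
    (hρ : ρ ∈ Set.Ioo (-1 : ℝ) 1) (hσ : 0 < σ) (hγ : 0 < γ) :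
    ∃! x : ℝ, 0 < x ∧
      (k/2) * (-x * (1 - stdPhi (Real.sqrt 2 * x / (Real.sqrt (1 - ρ) * σ))) +
        (σ * Real.sqrt (1 - ρ) / Real.sqrt 2) *
          stdPhi' (Real.sqrt 2 * x / (Real.sqrt (1 - ρ) * σ))) - 2 * γ * x = 0 := by
  have hs2 : (0:ℝ) < Real.sqrt 2 := by positivity
  have hr : (0:ℝ) < 1 - ρ := by linarith [hρ.2]
  have hsr : (0:ℝ) < Real.sqrt (1 - ρ) := Real.sqrt_pos.mpr hr
  set s : ℝ := Real.sqrt (1 - ρ) * σ with hs_def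
  have hs : 0 < s := by positivity
  set d : ℝ := σ * Real.sqrt (1 - ρ) / Real.sqrt 2 with hd_def
  have hd : 0 < d := by positivity
  set h : ℝ → ℝ := fun x =>
      (k/2) * (-x * (1 - stdPhi (Real.sqrt 2 * x / s)) +
        d * stdPhi' (Real.sqrt 2 * x / s)) - 2 * γ * x with hh_def
  -- derivative of h
  have hderiv : ∀ x : ℝ,
      HasDerivAt h ((k/2) * (stdPhi (Real.sqrt 2 * x / s) - 1) - 2 * γ) x := by
    intro x
    have ha : HasDerivAt (fun x : ℝ => Real.sqrt 2 * x / s) (Real.sqrt 2 / s) x := by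
      simpa using ((hasDerivAt_id x).const_mul (Real.sqrt 2)).div_const s
    set u : ℝ := Real.sqrt 2 * x / s with hu_def
    have hPhi : HasDerivAt (fun x : ℝ => stdPhi (Real.sqrt 2 * x / s))
        (stdPhi' u * (Real.sqrt 2 / s)) x := (stdPhi_hasDerivAt u).comp (h₂ := stdPhi) x ha
    have hphi : HasDerivAt (fun x : ℝ => stdPhi' (Real.sqrt 2 * x / s))
        ((-u * stdPhi' u) * (Real.sqrt 2 / s)) x := (stdPhi'_hasDerivAt u).comp (h₂ := stdPhi') x ha
    have t1 := ((hasDerivAt_id x).neg).mul ((hasDerivAt_const x (1:ℝ)).sub hPhi)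
    have t2 : HasDerivAt (fun x : ℝ => d * stdPhi' (Real.sqrt 2 * x / s))
        (d * ((-u * stdPhi' u) * (Real.sqrt 2 / s))) x := hphi.const_mul d
    have t3 : HasDerivAt (fun x : ℝ => 2 * γ * x) (2 * γ) x := by
      simpa using (hasDerivAt_id x).const_mul (2 * γ)
    have := (((t1.add t2)).const_mul (k/2)).sub t3
    refine this.congr_deriv ?_
    have hds : d * (Real.sqrt 2 / s) = 1 := by
      rw [hd_def, hs_def]
      field_simp
    have hinv : Real.sqrt 2 / s = d⁻¹ := eq_inv_of_mul_eq_one_right hds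
    have hux : Real.sqrt 2 * x / s = x * d⁻¹ := by rw [← hinv]; ring
    simp only [Pi.neg_apply, Pi.sub_apply, id_eq]
    rw [hu_def, hux, hinv]
    field_simp
    ring
  have hanti : StrictAnti h := strictAnti_of_deriv_neg fun x => by
    rw [(hderiv x).deriv]
    have hΦ : stdPhi (Real.sqrt 2 * x / s) ≤ 1 := stdPhi_le_one _
    nlinarith
  have hcont : Continuous h :=
    continuous_iff_continuousAt.mpr fun x => (hderiv x).continuousAt
  have h0pos : 0 < h 0 := by
    have e : h 0 = k / 2 * (d * stdPhi' (Real.sqrt 2 * 0 / s)) := by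
      simp [hh_def]
    rw [e]
    exact mul_pos (by linarith) (mul_pos hd (stdPhi'_pos _))
  obtain ⟨x₀, hx₀pos, hx₀neg⟩ : ∃ x₀ : ℝ, 0 < x₀ ∧ h x₀ < 0 := by
    refine ⟨k / 2 * d * (1 / Real.sqrt (2 * Real.pi)) / (2 * γ) + 1, ?_, ?_⟩
    · positivity
    · set x₀ : ℝ := k / 2 * d * (1 / Real.sqrt (2 * Real.pi)) / (2 * γ) + 1 with hx₀_def
      have hM : (0:ℝ) < 1 / Real.sqrt (2 * Real.pi) := by positivity
      have hx₀pos : 0 < x₀ := by rw [hx₀_def]; positivity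
      have hΦ : stdPhi (Real.sqrt 2 * x₀ / s) ≤ 1 := stdPhi_le_one _
      have hφ : stdPhi' (Real.sqrt 2 * x₀ / s) ≤ 1 / Real.sqrt (2 * Real.pi) :=
        stdPhi'_le _
      have h1 : -x₀ * (1 - stdPhi (Real.sqrt 2 * x₀ / s)) ≤ 0 :=
        mul_nonpos_of_nonpos_of_nonneg (by linarith) (by linarith)
      have h2 : d * stdPhi' (Real.sqrt 2 * x₀ / s) ≤ d * (1 / Real.sqrt (2 * Real.pi)) :=
        mul_le_mul_of_nonneg_left hφ hd.le
      have h3 : h x₀ ≤ k / 2 * (d * (1 / Real.sqrt (2 * Real.pi))) - 2 * γ * x₀ := by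
        have e : h x₀ = k / 2 * (-x₀ * (1 - stdPhi (Real.sqrt 2 * x₀ / s)) +
            d * stdPhi' (Real.sqrt 2 * x₀ / s)) - 2 * γ * x₀ := rfl
        rw [e]
        nlinarith
      have h4 : 2 * γ * x₀ = k / 2 * (d * (1 / Real.sqrt (2 * Real.pi))) + 2 * γ := by
        rw [hx₀_def]
        field_simp
      calc h x₀ ≤ k / 2 * (d * (1 / Real.sqrt (2 * Real.pi))) - 2 * γ * x₀ := h3
        _ = -(2 * γ) := by rw [h4]; ring
        _ < 0 := by linarith
  have key : (0:ℝ) ∈ h '' Set.Icc 0 x₀ := by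
    apply intermediate_value_Icc' hx₀pos.le hcont.continuousOn
    exact ⟨hx₀neg.le, h0pos.le⟩
  obtain ⟨x, hxmem, hx0⟩ := key
  have hxpos : 0 < x := by
    rcases lt_or_eq_of_le hxmem.1 with hlt | heq
    · exact hlt
    · exfalso
      rw [← heq] at hx0
      linarith
  refine ⟨x, ⟨hxpos, hx0⟩, ?_⟩
  rintro y ⟨hy, hy0⟩
  exact hanti.injective (show h y = h x from hy0.trans hx0.symm)
end
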